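/- Let n ≥ 1, 0 < β < 1, 0 < α < n with α + β < n. Suppose b : ℝⁿ → ℝ satisfies b(x) ≥ 0 for all x and |b(x) − b(y)| ≤ C |x − y|^β for all x, y ∈ ℝⁿ. Then there is a constant K depending only on n and β such that for every locally integrable f and every x ∈ ℝⁿ with M_α f(x) < ∞ and M_{α+β} f(x) < ∞, one has | b(x) M_α f(x) − M_α(b f)(x) | ≤ K C · M_{α+β} f(x). -/

import Mathlib

open MeasureTheory Metric Set
open scoped ENNReal NNReal

/-- The fractional maximal function `M_α f` on `ℝⁿ`:
`M_α f (x) = sup_{B ∋ x} |B|^{α/n - 1} ∫_B |f|`. -/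
noncomputable def fracMax (n : ℕ) (α : ℝ) (f : EuclideanSpace ℝ (Fin n) → ℝ)
    (x : EuclideanSpace ℝ (Fin n)) : ℝ≥0∞ :=
  ⨆ (c : EuclideanSpace ℝ (Fin n)) (r : ℝ) (_ : 0 < r) (_ : x ∈ ball c r),
    volume (ball c r) ^ (α / n - 1) * ∫⁻ y in ball c r, (‖f y‖₊ : ℝ≥0∞)

/-- The fractional maximal commutator `M_{α,b} f`:
`M_{α,b} f (x) = sup_{B ∋ x} |B|^{α/n - 1} ∫_B |b(x) - b(y)| |f(y)| dy`. -/
noncomputable def fracMaxComm (n : ℕ) (α : ℝ) (b f : EuclideanSpace ℝ (Fin n) → ℝ)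
    (x : EuclideanSpace ℝ (Fin n)) : ℝ≥0∞ :=
  ⨆ (c : EuclideanSpace ℝ (Fin n)) (r : ℝ) (_ : 0 < r) (_ : x ∈ ball c r),
    volume (ball c r) ^ (α / n - 1) *
      ∫⁻ y in ball c r, (‖b x - b y‖₊ : ℝ≥0∞) * (‖f y‖₊ : ℝ≥0∞)

/-- The local fractional maximal function `M_{α,B₀} f`, supremum over balls `B` with
`x ∈ B ⊆ B₀`. For `α = 0` this is the local Hardy–Littlewood maximal function `M_{B₀}`. -/
noncomputable def fracMaxLocal (n : ℕ) (α : ℝ) (B₀ : Set (EuclideanSpace ℝ (Fin n)))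
    (f : EuclideanSpace ℝ (Fin n) → ℝ) (x : EuclideanSpace ℝ (Fin n)) : ℝ≥0∞ :=
  ⨆ (c : EuclideanSpace ℝ (Fin n)) (r : ℝ) (_ : 0 < r) (_ : x ∈ ball c r)
    (_ : ball c r ⊆ B₀),
    volume (ball c r) ^ (α / n - 1) * ∫⁻ y in ball c r, (‖f y‖₊ : ℝ≥0∞)

/-- The average `b_B = |B|⁻¹ ∫_B b` of `b` over the ball `B = ball c r`. -/
noncomputable def ballAvg (n : ℕ) (b : EuclideanSpace ℝ (Fin n) → ℝ)
    (c : EuclideanSpace ℝ (Fin n)) (r : ℝ) : ℝ :=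
  (volume (ball c r)).toReal⁻¹ * ∫ y in ball c r, b y

lemma aux_le_fracMax (n : ℕ) (α : ℝ) (f : EuclideanSpace ℝ (Fin n) → ℝ)
    (x c : EuclideanSpace ℝ (Fin n)) {r : ℝ} (hr : 0 < r) (hx : x ∈ ball c r) :
    volume (ball c r) ^ (α / n - 1) * ∫⁻ y in ball c r, (‖f y‖₊ : ℝ≥0∞) ≤
      fracMax n α f x :=
  le_iSup_of_le c <| le_iSup_of_le r <| le_iSup_of_le hr <| le_iSup_of_le hx le_rfl

theorem stmt9 (n : ℕ) (hn : 1 ≤ n) (α β : ℝ) (hβ0 : 0 < β) (hβ1 : β < 1)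
    (hα0 : 0 < α) (hαn : α < n) (hαβn : α + β < n)
    (b : EuclideanSpace ℝ (Fin n) → ℝ) (hbpos : ∀ x, 0 ≤ b x) (C : ℝ)
    (hb : ∀ x y, |b x - b y| ≤ C * ‖x - y‖ ^ β) :
    ∃ K : ℝ, 0 ≤ K ∧
      ∀ f : EuclideanSpace ℝ (Fin n) → ℝ, LocallyIntegrable f volume →
        ∀ x : EuclideanSpace ℝ (Fin n),
          fracMax n α f x ≠ ⊤ → fracMax n (α + β) f x ≠ ⊤ →
          |b x * (fracMax n α f x).toReal -
              (fracMax n α (fun y => b y * f y) x).toReal| ≤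
            K * C * (fracMax n (α + β) f x).toReal := by
  haveI : Nonempty (Fin n) := ⟨⟨0, hn⟩⟩
  haveI : Nontrivial (EuclideanSpace ℝ (Fin n)) := by
    have h01 : (0:EuclideanSpace ℝ (Fin n)) ≠ EuclideanSpace.single ⟨0,hn⟩ (1:ℝ) := by
      intro h
      have := congrArg (fun v => ‖v‖) h
      simp [EuclideanSpace.norm_single] at this
    exact ⟨⟨_, _, h01⟩⟩
  have hn0 : (n : ℝ) ≠ 0 := Nat.cast_ne_zero.mpr (by omega)
  have hC : 0 ≤ C := by
    have h := hb (EuclideanSpace.single ⟨0, hn⟩ (1:ℝ)) 0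
    rw [sub_zero, EuclideanSpace.norm_single] at h
    simp only [norm_one, Real.one_rpow, mul_one] at h
    exact le_trans (abs_nonneg _) h
  have hbholder : HolderWith C.toNNReal β.toNNReal b := by
    intro p q
    rw [edist_dist, Real.dist_eq]
    calc ENNReal.ofReal |b p - b q| ≤ ENNReal.ofReal (C * dist p q ^ β) := by
          apply ENNReal.ofReal_le_ofReal
          rw [dist_eq_norm]; exact hb p q
      _ = ↑C.toNNReal * edist p q ^ (β.toNNReal : ℝ) := by
          rw [edist_dist, ENNReal.ofReal_mul hC,
            ← ENNReal.ofReal_rpow_of_nonneg dist_nonneg hβ0.le,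
            Real.coe_toNNReal β hβ0.le]
          rfl
  have hbm : Measurable b := (hbholder.continuous (Real.toNNReal_pos.mpr hβ0)).measurable
  set v₁ : ℝ≥0∞ := volume (ball (0 : EuclideanSpace ℝ (Fin n)) 1) with hv₁
  have hv₁0 : v₁ ≠ 0 := (measure_ball_pos volume 0 one_pos).ne'
  have hv₁top : v₁ ≠ ⊤ := measure_ball_lt_top.ne
  have hvpow_top : v₁ ^ (-(β / (n:ℝ))) ≠ ⊤ := by
    simp [ENNReal.rpow_eq_top_iff, hv₁0, hv₁top]
  set κ : ℝ≥0∞ := ENNReal.ofReal C * (ENNReal.ofReal (2 ^ β) * v₁ ^ (-(β / (n:ℝ)))) with hκ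
  have hκtop : κ ≠ ⊤ := by
    rw [hκ]
    exact ENNReal.mul_ne_top ENNReal.ofReal_ne_top
      (ENNReal.mul_ne_top ENNReal.ofReal_ne_top hvpow_top)
  refine ⟨2 ^ β * (v₁ ^ (-(β / (n:ℝ)))).toReal, by positivity, ?_⟩
  intro f hf x hSfin hUfin
  have hfm : AEMeasurable f volume := hf.aestronglyMeasurable.aemeasurable
  -- the per-ball constant identity
  have hconst : ∀ (c : EuclideanSpace ℝ (Fin n)) (r : ℝ), 0 < r →
      volume (ball c r) ^ (α / n - 1) * ENNReal.ofReal (C * (2 * r) ^ β) =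
        κ * volume (ball c r) ^ ((α + β) / n - 1) := by
    intro c r hr
    have hVball : volume (ball c r) =
        ENNReal.ofReal (r ^ n) * v₁ := by
      have := Measure.addHaar_ball (μ := volume) c hr.le
      rwa [finrank_euclideanSpace_fin] at this
    have hV0 : volume (ball c r) ≠ 0 := (measure_ball_pos volume c hr).ne'
    have hVtop : volume (ball c r) ≠ ⊤ := measure_ball_lt_top.ne
    have hsplit : volume (ball c r) ^ (α / n - 1) =
        volume (ball c r) ^ ((α + β) / n - 1) * volume (ball c r) ^ (-(β / (n:ℝ))) := by
      rw [← ENNReal.rpow_add _ _ hV0 hVtop]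
      congr 1
      ring
    have hVneg : volume (ball c r) ^ (-(β / (n:ℝ))) =
        ENNReal.ofReal (r ^ (-β)) * v₁ ^ (-(β / (n:ℝ))) := by
      rw [hVball, ENNReal.mul_rpow_of_ne_zero (by positivity) hv₁0]
      congr 1
      rw [ENNReal.ofReal_rpow_of_pos (by positivity)]
      congr 1
      rw [← Real.rpow_natCast r n, ← Real.rpow_mul hr.le]
      congr 1
      field_simp
    have h2r : ENNReal.ofReal (C * (2 * r) ^ β) =
        ENNReal.ofReal C * (ENNReal.ofReal (2 ^ β) * ENNReal.ofReal (r ^ β)) := by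
      rw [Real.mul_rpow (by norm_num) hr.le, ENNReal.ofReal_mul hC,
        ENNReal.ofReal_mul (by positivity)]
    have hrr : ENNReal.ofReal (r ^ β) * ENNReal.ofReal (r ^ (-β)) = 1 := by
      rw [← ENNReal.ofReal_mul (by positivity), ← Real.rpow_add hr]
      simp
    calc volume (ball c r) ^ (α / n - 1) * ENNReal.ofReal (C * (2 * r) ^ β)
        = (volume (ball c r) ^ ((α + β) / n - 1) *
            (ENNReal.ofReal (r ^ (-β)) * v₁ ^ (-(β / (n:ℝ))))) *
            (ENNReal.ofReal C * (ENNReal.ofReal (2 ^ β) * ENNReal.ofReal (r ^ β))) := by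
          rw [hsplit, hVneg, h2r]
      _ = (κ * volume (ball c r) ^ ((α + β) / n - 1)) *
            (ENNReal.ofReal (r ^ β) * ENNReal.ofReal (r ^ (-β))) := by rw [hκ]; ring
      _ = κ * volume (ball c r) ^ ((α + β) / n - 1) := by rw [hrr, mul_one]
  -- the per-ball commutator bound
  have hcomm : ∀ (c : EuclideanSpace ℝ (Fin n)) (r : ℝ), 0 < r → x ∈ ball c r →
      volume (ball c r) ^ (α / n - 1) *
          ∫⁻ y in ball c r, (‖b x - b y‖₊ : ℝ≥0∞) * (‖f y‖₊ : ℝ≥0∞) ≤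
        κ * fracMax n (α + β) f x := by
    intro c r hr hx
    have hpt : ∀ y ∈ ball c r,
        (‖b x - b y‖₊ : ℝ≥0∞) * (‖f y‖₊ : ℝ≥0∞) ≤
          ENNReal.ofReal (C * (2 * r) ^ β) * (‖f y‖₊ : ℝ≥0∞) := by
      intro y hy
      apply mul_le_mul_left
      rw [← enorm_eq_nnnorm (b x - b y), Real.enorm_eq_ofReal_abs]
      apply ENNReal.ofReal_le_ofReal
      calc |b x - b y| ≤ C * ‖x - y‖ ^ β := hb x y
        _ ≤ C * (2 * r) ^ β := by
            apply mul_le_mul_of_nonneg_left _ hC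
            apply Real.rpow_le_rpow (norm_nonneg _) _ hβ0.le
            rw [← dist_eq_norm]
            calc dist x y ≤ dist x c + dist c y := dist_triangle _ _ _
              _ ≤ r + r := by
                  have h1 : dist x c < r := mem_ball.mp hx
                  have h2 : dist c y < r := by
                    rw [dist_comm]; exact mem_ball.mp hy
                  linarith
              _ = 2 * r := by ring
    calc volume (ball c r) ^ (α / n - 1) *
          ∫⁻ y in ball c r, (‖b x - b y‖₊ : ℝ≥0∞) * (‖f y‖₊ : ℝ≥0∞)
        ≤ volume (ball c r) ^ (α / n - 1) *
          ∫⁻ y in ball c r, ENNReal.ofReal (C * (2 * r) ^ β) * (‖f y‖₊ : ℝ≥0∞) := by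
          exact mul_le_mul_right (setLIntegral_mono' measurableSet_ball hpt) _
      _ = volume (ball c r) ^ (α / n - 1) *
            (ENNReal.ofReal (C * (2 * r) ^ β) * ∫⁻ y in ball c r, (‖f y‖₊ : ℝ≥0∞)) := by
          rw [lintegral_const_mul' _ _ ENNReal.ofReal_ne_top]
      _ = (volume (ball c r) ^ (α / n - 1) * ENNReal.ofReal (C * (2 * r) ^ β)) *
            ∫⁻ y in ball c r, (‖f y‖₊ : ℝ≥0∞) := by ring
      _ = κ * (volume (ball c r) ^ ((α + β) / n - 1) *
            ∫⁻ y in ball c r, (‖f y‖₊ : ℝ≥0∞)) := by rw [hconst c r hr]; ring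
      _ ≤ κ * fracMax n (α + β) f x :=
          mul_le_mul_right (aux_le_fracMax n (α + β) f x c hr hx) _
  -- measurability of the commutator integrand
  have hcm : ∀ c r, AEMeasurable
      (fun y => (‖b x - b y‖₊ : ℝ≥0∞) * (‖f y‖₊ : ℝ≥0∞))
      ((volume : Measure (EuclideanSpace ℝ (Fin n))).restrict (ball c r)) := by
    intro c r
    exact (((measurable_const.sub hbm).enorm).aemeasurable.mul hfm.enorm).restrict
  -- key inequality 1 : b x * M_α f ≤ M_α (b f) + κ * M_{α+β} f
  have key1 : ENNReal.ofReal (b x) * fracMax n α f x ≤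
      fracMax n α (fun y => b y * f y) x + κ * fracMax n (α + β) f x := by
    rw [fracMax, ENNReal.mul_iSup]
    refine iSup_le fun c => ?_
    rw [ENNReal.mul_iSup]
    refine iSup_le fun r => ?_
    rw [ENNReal.mul_iSup]
    refine iSup_le fun hr => ?_
    rw [ENNReal.mul_iSup]
    refine iSup_le fun hx => ?_
    calc ENNReal.ofReal (b x) *
          (volume (ball c r) ^ (α / n - 1) * ∫⁻ y in ball c r, (‖f y‖₊ : ℝ≥0∞))
        = volume (ball c r) ^ (α / n - 1) *
            ∫⁻ y in ball c r, (‖b x‖₊ : ℝ≥0∞) * (‖f y‖₊ : ℝ≥0∞) := by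
          rw [lintegral_const_mul' _ _ (by exact ENNReal.coe_ne_top),
            ← enorm_eq_nnnorm (b x), Real.enorm_eq_ofReal (hbpos x)]
          ring
      _ ≤ volume (ball c r) ^ (α / n - 1) *
            ∫⁻ y in ball c r, ((‖b x - b y‖₊ : ℝ≥0∞) * (‖f y‖₊ : ℝ≥0∞) +
              (‖b y * f y‖₊ : ℝ≥0∞)) := by
          refine mul_le_mul_right (lintegral_mono fun y => ?_) _
          have h1 : (‖b x‖₊ : ℝ≥0∞) ≤ (‖b x - b y‖₊ : ℝ≥0∞) + (‖b y‖₊ : ℝ≥0∞) := by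
            have : ‖b x‖₊ ≤ ‖b x - b y‖₊ + ‖b y‖₊ := by
              calc ‖b x‖₊ = ‖(b x - b y) + b y‖₊ := by ring_nf
                _ ≤ ‖b x - b y‖₊ + ‖b y‖₊ := nnnorm_add_le _ _
            exact_mod_cast this
          calc (‖b x‖₊ : ℝ≥0∞) * (‖f y‖₊ : ℝ≥0∞)
              ≤ ((‖b x - b y‖₊ : ℝ≥0∞) + (‖b y‖₊ : ℝ≥0∞)) * (‖f y‖₊ : ℝ≥0∞) :=
                mul_le_mul_left h1 _
            _ = (‖b x - b y‖₊ : ℝ≥0∞) * (‖f y‖₊ : ℝ≥0∞) + (‖b y * f y‖₊ : ℝ≥0∞) := by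
                rw [add_mul, nnnorm_mul]
                push_cast
                ring
      _ = (volume (ball c r) ^ (α / n - 1) *
            ∫⁻ y in ball c r, (‖b x - b y‖₊ : ℝ≥0∞) * (‖f y‖₊ : ℝ≥0∞)) +
          volume (ball c r) ^ (α / n - 1) *
            ∫⁻ y in ball c r, (‖b y * f y‖₊ : ℝ≥0∞) := by
          rw [lintegral_add_left' (hcm c r), mul_add]
      _ ≤ κ * fracMax n (α + β) f x + fracMax n α (fun y => b y * f y) x := by
          exact add_le_add (hcomm c r hr hx)
            (aux_le_fracMax n α (fun y => b y * f y) x c hr hx)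
      _ = fracMax n α (fun y => b y * f y) x + κ * fracMax n (α + β) f x := add_comm _ _
  -- key inequality 2 : M_α (b f) ≤ b x * M_α f + κ * M_{α+β} f
  have key2 : fracMax n α (fun y => b y * f y) x ≤
      ENNReal.ofReal (b x) * fracMax n α f x + κ * fracMax n (α + β) f x := by
    rw [fracMax]
    refine iSup_le fun c => iSup_le fun r => iSup_le fun hr => iSup_le fun hx => ?_
    calc volume (ball c r) ^ (α / n - 1) * ∫⁻ y in ball c r, (‖b y * f y‖₊ : ℝ≥0∞)
        ≤ volume (ball c r) ^ (α / n - 1) *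
            ∫⁻ y in ball c r, ((‖b x - b y‖₊ : ℝ≥0∞) * (‖f y‖₊ : ℝ≥0∞) +
              (‖b x‖₊ : ℝ≥0∞) * (‖f y‖₊ : ℝ≥0∞)) := by
          refine mul_le_mul_right (lintegral_mono fun y => ?_) _
          have h1 : (‖b y‖₊ : ℝ≥0∞) ≤ (‖b x - b y‖₊ : ℝ≥0∞) + (‖b x‖₊ : ℝ≥0∞) := by
            have : ‖b y‖₊ ≤ ‖b x - b y‖₊ + ‖b x‖₊ := by
              calc ‖b y‖₊ = ‖-((b x - b y)) + b x‖₊ := by ring_nf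
                _ ≤ ‖-(b x - b y)‖₊ + ‖b x‖₊ := nnnorm_add_le _ _
                _ = ‖b x - b y‖₊ + ‖b x‖₊ := by rw [nnnorm_neg]
            exact_mod_cast this
          calc (‖b y * f y‖₊ : ℝ≥0∞) = (‖b y‖₊ : ℝ≥0∞) * (‖f y‖₊ : ℝ≥0∞) := by
                rw [nnnorm_mul]; push_cast; ring
            _ ≤ ((‖b x - b y‖₊ : ℝ≥0∞) + (‖b x‖₊ : ℝ≥0∞)) * (‖f y‖₊ : ℝ≥0∞) :=
                mul_le_mul_left h1 _
            _ = (‖b x - b y‖₊ : ℝ≥0∞) * (‖f y‖₊ : ℝ≥0∞) +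
                (‖b x‖₊ : ℝ≥0∞) * (‖f y‖₊ : ℝ≥0∞) := add_mul _ _ _
      _ = (volume (ball c r) ^ (α / n - 1) *
            ∫⁻ y in ball c r, (‖b x - b y‖₊ : ℝ≥0∞) * (‖f y‖₊ : ℝ≥0∞)) +
          volume (ball c r) ^ (α / n - 1) *
            ((‖b x‖₊ : ℝ≥0∞) * ∫⁻ y in ball c r, (‖f y‖₊ : ℝ≥0∞)) := by
          rw [lintegral_add_left' (hcm c r),
            lintegral_const_mul' _ _ (by exact ENNReal.coe_ne_top), mul_add]
      _ ≤ κ * fracMax n (α + β) f x +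
            ENNReal.ofReal (b x) * fracMax n α f x := by
          refine add_le_add (hcomm c r hr hx) ?_
          rw [← enorm_eq_nnnorm (b x), Real.enorm_eq_ofReal (hbpos x), mul_left_comm]
          exact mul_le_mul_right (aux_le_fracMax n α f x c hr hx) _
      _ = ENNReal.ofReal (b x) * fracMax n α f x + κ * fracMax n (α + β) f x := add_comm _ _
  -- finiteness
  have hκU : κ * fracMax n (α + β) f x ≠ ⊤ := ENNReal.mul_ne_top hκtop hUfin
  have hbS : ENNReal.ofReal (b x) * fracMax n α f x ≠ ⊤ :=
    ENNReal.mul_ne_top ENNReal.ofReal_ne_top hSfin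
  have hTfin : fracMax n α (fun y => b y * f y) x ≠ ⊤ :=
    ne_top_of_le_ne_top (ENNReal.add_ne_top.mpr ⟨hbS, hκU⟩) key2
  -- pass to real numbers
  have e1 : (ENNReal.ofReal (b x) * fracMax n α f x).toReal =
      b x * (fracMax n α f x).toReal := by
    rw [ENNReal.toReal_mul, ENNReal.toReal_ofReal (hbpos x)]
  have eκ : (κ * fracMax n (α + β) f x).toReal =
      2 ^ β * (v₁ ^ (-(β / (n:ℝ)))).toReal * C * (fracMax n (α + β) f x).toReal := by
    rw [ENNReal.toReal_mul, hκ, ENNReal.toReal_mul, ENNReal.toReal_mul,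
      ENNReal.toReal_ofReal hC, ENNReal.toReal_ofReal (by positivity)]
    ring
  have h1R : b x * (fracMax n α f x).toReal ≤
      (fracMax n α (fun y => b y * f y) x).toReal +
        (κ * fracMax n (α + β) f x).toReal := by
    rw [← e1, ← ENNReal.toReal_add hTfin hκU]
    exact ENNReal.toReal_mono (ENNReal.add_ne_top.mpr ⟨hTfin, hκU⟩) key1
  have h2R : (fracMax n α (fun y => b y * f y) x).toReal ≤
      b x * (fracMax n α f x).toReal + (κ * fracMax n (α + β) f x).toReal := by
    rw [← e1, ← ENNReal.toReal_add hbS hκU]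
    exact ENNReal.toReal_mono (ENNReal.add_ne_top.mpr ⟨hbS, hκU⟩) key2
  rw [abs_le]
  constructor
  · rw [← eκ]; linarith
  · rw [← eκ]; linarith
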